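/- (Optimal shot number under a parameter-switching penalty.) Let c₁, c₂, c₃, γ, N_tot > 0 and define g(s) = c₁ √((s + γ)/N_tot) + c₂ √((s + γ)/(N_tot · s)) + c₃ √((s + γ)/N_tot) for s ∈ (0, ∞). Then g attains a unique global minimum on (0, ∞) at s* = ( c₂ γ / (c₁ + c₃) )^{2/3}; that is, g(s*) ≤ g(s) for all s > 0, with equality only at s = s*. Moreover g is strictly decreasing on (0, s*) and strictly increasing on (s*, ∞). -/

import Mathlib

/-- The risk bound under a total measurement budget `N_tot` with parameter-switching
penalty `γ`: `g(s) = c₁ √((s+γ)/N_tot) + c₂ √((s+γ)/(N_tot s)) + c₃ √((s+γ)/N_tot)`. -/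
noncomputable def penalizedRiskBound (c₁ c₂ c₃ γ Ntot s : ℝ) : ℝ :=
  c₁ * Real.sqrt ((s + γ) / Ntot) + c₂ * Real.sqrt ((s + γ) / (Ntot * s))
    + c₃ * Real.sqrt ((s + γ) / Ntot)

noncomputable def auxF (A B γ N s : ℝ) : ℝ :=
  (A * Real.sqrt (s + γ) + B * Real.sqrt ((s + γ) / s)) / Real.sqrt N

lemma aux_deriv (A B γ N : ℝ) (hγ : 0 < γ) (hN : 0 < N) {s : ℝ} (hs : 0 < s) :
    HasDerivAt (auxF A B γ N)
      (Real.sqrt s * (A * (s * Real.sqrt s) - B * γ)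
        / (2 * s ^ 2 * Real.sqrt (s + γ) * Real.sqrt N)) s := by
  have hsγ : 0 < s + γ := by linarith
  have hsne : s ≠ 0 := hs.ne'
  have hsqs : (0:ℝ) < Real.sqrt s := Real.sqrt_pos.mpr hs
  have hsqγ : (0:ℝ) < Real.sqrt (s + γ) := Real.sqrt_pos.mpr hsγ
  have hsqN : (0:ℝ) < Real.sqrt N := Real.sqrt_pos.mpr hN
  have h1 : HasDerivAt (fun x : ℝ => x + γ) 1 s := (hasDerivAt_id s).add_const γ
  have h2 : HasDerivAt (fun x : ℝ => Real.sqrt (x + γ)) (1 / (2 * Real.sqrt (s + γ))) s := by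
    simpa using h1.sqrt hsγ.ne'
  have h3 : HasDerivAt (fun x : ℝ => (x + γ) / x) ((1 * s - (s + γ) * 1) / s ^ 2) s :=
    h1.div (hasDerivAt_id s) hsne
  have h4 : HasDerivAt (fun x : ℝ => Real.sqrt ((x + γ) / x))
      (((1 * s - (s + γ) * 1) / s ^ 2) / (2 * Real.sqrt ((s + γ) / s))) s := by
    have hne : (s + γ) / s ≠ 0 := by positivity
    exact h3.sqrt hne
  have h5 := ((h2.const_mul A).add (h4.const_mul B)).div_const (Real.sqrt N)
  convert h5 using 1
  case e'_4 => rfl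
  case e'_5 => rfl
  case e'_8 => rfl
  rw [Real.sqrt_div hsγ.le]
  have hss : Real.sqrt s * Real.sqrt s = s := Real.mul_self_sqrt hs.le
  field_simp
  ring_nf
  rw [Real.sq_sqrt hs.le]
  ring

lemma aux_sstar (A B γ : ℝ) (hA : 0 < A) (hB : 0 < B) (hγ : 0 < γ) :
    (0 : ℝ) < (B * γ / A) ^ ((2:ℝ)/3) ∧
      ((B * γ / A) ^ ((2:ℝ)/3)) * Real.sqrt ((B * γ / A) ^ ((2:ℝ)/3)) = B * γ / A := by
  set t : ℝ := B * γ / A with ht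
  have htpos : 0 < t := by positivity
  constructor
  · positivity
  · rw [Real.sqrt_eq_rpow, ← Real.rpow_mul htpos.le, ← Real.rpow_add htpos]
    norm_num

lemma aux_mul_sqrt_lt {x y : ℝ} (hx : 0 < x) (hxy : x < y) :
    x * Real.sqrt x < y * Real.sqrt y := by
  have := Real.sqrt_lt_sqrt hx.le hxy
  have h0 : 0 < Real.sqrt x := Real.sqrt_pos.mpr hx
  nlinarith

lemma aux_mono (A B γ N : ℝ) (hA : 0 < A) (hB : 0 < B) (hγ : 0 < γ) (hN : 0 < N) :
    StrictAntiOn (auxF A B γ N) (Set.Ioc 0 ((B * γ / A) ^ ((2:ℝ)/3))) ∧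
    StrictMonoOn (auxF A B γ N) (Set.Ici ((B * γ / A) ^ ((2:ℝ)/3))) := by
  obtain ⟨hspos, hsval⟩ := aux_sstar A B γ hA hB hγ
  set st : ℝ := (B * γ / A) ^ ((2:ℝ)/3) with hst
  have hts : A * (st * Real.sqrt st) = B * γ := by
    rw [hsval]; field_simp
  have hderiv : ∀ x ∈ Set.Ioi (0:ℝ), HasDerivAt (auxF A B γ N)
      (Real.sqrt x * (A * (x * Real.sqrt x) - B * γ)
        / (2 * x ^ 2 * Real.sqrt (x + γ) * Real.sqrt N)) x :=
    fun x hx => aux_deriv A B γ N hγ hN hx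
  have hcont : ContinuousOn (auxF A B γ N) (Set.Ioi (0:ℝ)) :=
    fun x hx => (hderiv x hx).continuousAt.continuousWithinAt
  constructor
  · apply strictAntiOn_of_deriv_neg (convex_Ioc 0 st)
      (hcont.mono (fun x hx => hx.1))
    intro x hx
    rw [interior_Ioc] at hx
    have hx0 : 0 < x := hx.1
    rw [(hderiv x hx.1).deriv]
    apply div_neg_of_neg_of_pos
    · have h1 : x * Real.sqrt x < st * Real.sqrt st := aux_mul_sqrt_lt hx0 hx.2
      have h2 : A * (x * Real.sqrt x) < B * γ := by
        calc A * (x * Real.sqrt x) < A * (st * Real.sqrt st) := by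
              exact mul_lt_mul_of_pos_left h1 hA
          _ = B * γ := hts
      have h3 : 0 < Real.sqrt x := Real.sqrt_pos.mpr hx0
      nlinarith
    · have : 0 < x + γ := by linarith
      positivity
  · apply strictMonoOn_of_deriv_pos (convex_Ici st)
      (hcont.mono (fun x hx => lt_of_lt_of_le hspos hx))
    intro x hx
    rw [interior_Ici] at hx
    have hx0 : 0 < x := lt_trans hspos hx
    rw [(hderiv x hx0).deriv]
    apply div_pos
    · have h1 : st * Real.sqrt st < x * Real.sqrt x := aux_mul_sqrt_lt hspos hx
      have h2 : B * γ < A * (x * Real.sqrt x) := by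
        calc B * γ = A * (st * Real.sqrt st) := hts.symm
          _ < A * (x * Real.sqrt x) := mul_lt_mul_of_pos_left h1 hA
      have h3 : 0 < Real.sqrt x := Real.sqrt_pos.mpr hx0
      nlinarith
    · have : 0 < x + γ := by linarith
      positivity

lemma aux_eq (c₁ c₂ c₃ γ N : ℝ) (hγ : 0 < γ) {s : ℝ} (hs : 0 < s) :
    penalizedRiskBound c₁ c₂ c₃ γ N s = auxF (c₁ + c₃) c₂ γ N s := by
  have hsγ : (0:ℝ) ≤ s + γ := by linarith
  have e1 : Real.sqrt ((s + γ) / N) = Real.sqrt (s + γ) / Real.sqrt N := Real.sqrt_div hsγ N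
  have e3 : Real.sqrt ((s + γ) / s) = Real.sqrt (s + γ) / Real.sqrt s := Real.sqrt_div hsγ s
  have e2 : Real.sqrt ((s + γ) / (N * s))
      = Real.sqrt (s + γ) / Real.sqrt s / Real.sqrt N := by
    rw [div_mul_eq_div_div_swap, Real.sqrt_div (by positivity : (0:ℝ) ≤ (s + γ) / s), e3]
  unfold penalizedRiskBound auxF
  rw [e1, e2, e3]
  ring

/-- optimal shot number under a parameter-switching penalty. For
`c₁, c₂, c₃, γ, N_tot > 0`, the function `g` attains a unique global minimum on `(0, ∞)`
at `s* = (c₂ γ / (c₁ + c₃))^{2/3}`; moreover `g` is strictly decreasing on `(0, s*)` and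
strictly increasing on `(s*, ∞)`. -/
theorem optimal_shot_number_with_penalty
    (c₁ c₂ c₃ γ Ntot : ℝ) (h₁ : 0 < c₁) (h₂ : 0 < c₂) (h₃ : 0 < c₃)
    (hγ : 0 < γ) (hN : 0 < Ntot)
    (sstar : ℝ) (hs : sstar = (c₂ * γ / (c₁ + c₃)) ^ ((2 : ℝ) / 3)) :
    (∀ s, 0 < s → penalizedRiskBound c₁ c₂ c₃ γ Ntot sstar
        ≤ penalizedRiskBound c₁ c₂ c₃ γ Ntot s) ∧
    (∀ s, 0 < s → penalizedRiskBound c₁ c₂ c₃ γ Ntot s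
        = penalizedRiskBound c₁ c₂ c₃ γ Ntot sstar → s = sstar) ∧
    StrictAntiOn (penalizedRiskBound c₁ c₂ c₃ γ Ntot) (Set.Ioo 0 sstar) ∧
    StrictMonoOn (penalizedRiskBound c₁ c₂ c₃ γ Ntot) (Set.Ioi sstar) := by
  have hA : 0 < c₁ + c₃ := by linarith
  obtain ⟨hspos, -⟩ := aux_sstar (c₁ + c₃) c₂ γ hA h₂ hγ
  rw [← hs] at hspos
  obtain ⟨hanti, hmono⟩ := aux_mono (c₁ + c₃) c₂ γ Ntot hA h₂ hγ hN
  rw [← hs] at hanti hmono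
  have heq : ∀ {s : ℝ}, 0 < s →
      penalizedRiskBound c₁ c₂ c₃ γ Ntot s = auxF (c₁ + c₃) c₂ γ Ntot s :=
    fun h => aux_eq c₁ c₂ c₃ γ Ntot hγ h
  have key : ∀ s, 0 < s → s ≠ sstar →
      auxF (c₁ + c₃) c₂ γ Ntot sstar < auxF (c₁ + c₃) c₂ γ Ntot s := by
    intro s hs0 hne
    rcases lt_or_gt_of_ne hne with h | h
    · exact hanti ⟨hs0, h.le⟩ ⟨hspos, le_refl _⟩ h
    · exact hmono (by exact le_refl sstar) (Set.mem_Ici.mpr h.le) h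
  refine ⟨?_, ?_, ?_, ?_⟩
  · intro s hs0
    rw [heq hs0, heq hspos]
    rcases eq_or_ne s sstar with h | h
    · rw [h]
    · exact (key s hs0 h).le
  · intro s hs0 hval
    by_contra hne
    rw [heq hs0, heq hspos] at hval
    exact absurd hval (key s hs0 hne).ne'
  · intro x hx y hy hxy
    rw [heq hx.1, heq hy.1]
    exact hanti ⟨hx.1, hx.2.le⟩ ⟨hy.1, hy.2.le⟩ hxy
  · intro x hx y hy hxy
    have hx0 : 0 < x := lt_trans hspos hx
    have hy0 : 0 < y := lt_trans hspos hy
    rw [heq hx0, heq hy0]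
    exact hmono (Set.mem_Ici.mpr (le_of_lt hx)) (Set.mem_Ici.mpr (le_of_lt hy)) hxy
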